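/- There is no k ∈ ℕ and k-color edge coloring model h ∈ (S V_k)* such that p_h(G) = p(G;0) for all graphs G; that is, the evaluation of the characteristic polynomial at 0 is not the partition function of any edge coloring model. -/

import Mathlib

open scoped TensorProduct

/-! ### Finite multigraphs

A finite multigraph: vertices are `Fin n`, edges are `Fin m`.  An edge either has an
(arbitrarily ordered) pair of endpoints — a loop when the two endpoints coincide — or
no endpoints at all (`none`), the latter representing the *circle* `○`, the connected
graph consisting of a single edge and no vertices. -/
structure MGraph where
  n : ℕ
  m : ℕ
  ends : Fin m → Option (Fin n × Fin n)

/-- A *dart* is an edge together with one of its two ends; `dartVertex` is the vertex at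
which this end is located (`none` for circle edges). -/
def dartVertex (G : MGraph) (d : Fin G.m × Bool) : Option (Fin G.n) :=
  (G.ends d.1).map fun p => if d.2 then p.2 else p.1

/-- The other dart of the same edge. -/
def flipDart (G : MGraph) (d : Fin G.m × Bool) : Fin G.m × Bool := (d.1, !d.2)

/-- The degree of the vertex `v` in the spanning subgraph `(V,F)`; loops count twice. -/
def degF (G : MGraph) (F : Finset (Fin G.m)) (v : Fin G.n) : ℕ :=
  (Finset.univ.filter fun d : Fin G.m × Bool => d.1 ∈ F ∧ dartVertex G d = some v).card

/-- The degree of a vertex (loops count twice). -/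
def degreeV (G : MGraph) (v : Fin G.n) : ℕ := degF G Finset.univ v

/-- `F ⊆ E` is Eulerian if every vertex of `(V,F)` has even degree. -/
def IsEulerianSet (G : MGraph) (F : Finset (Fin G.m)) : Prop := ∀ v, Even (degF G F v)

/-- The spanning subgraph `G(F) = (V,F)`. -/
def subgraphOf (G : MGraph) (F : Finset (Fin G.m)) : MGraph where
  n := G.n
  m := F.card
  ends := fun i => G.ends ((F.orderIsoOfFin rfl i : Fin G.m))

/-- The empty graph. -/
def emptyMGraph : MGraph := ⟨0, 0, fun _ => none⟩

/-- The circle `○`: one edge, no vertices. -/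
def circleGraph : MGraph := ⟨0, 1, fun _ => none⟩

/-- Disjoint union of two multigraphs. -/
def disjUnion (G H : MGraph) : MGraph where
  n := G.n + H.n
  m := G.m + H.m
  ends := fun e =>
    match finSumFinEquiv.symm e with
    | Sum.inl e => (G.ends e).map (Prod.map (Fin.castAdd H.n) (Fin.castAdd H.n))
    | Sum.inr e => (H.ends e).map (Prod.map (Fin.natAdd G.n) (Fin.natAdd G.n))

/-- Isomorphism of multigraphs: bijections on vertices and edges preserving the
(unordered) endpoints, and preserving circle edges. -/
def IsIsoGraph (G G' : MGraph) : Prop :=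
  ∃ (σ : Fin G.n ≃ Fin G'.n) (τ : Fin G.m ≃ Fin G'.m),
    ∀ e, G'.ends (τ e) = Option.map (Prod.map σ σ) (G.ends e) ∨
         G'.ends (τ e) = Option.map (fun p => (σ p.2, σ p.1)) (G.ends e)

/-- A graph parameter: a complex-valued graph invariant. -/
def IsGraphParameter (f : MGraph → ℂ) : Prop :=
  ∀ G G', IsIsoGraph G G' → f G = f G'

/-- The adjacency matrix: `A v w` is the number of edges between `v ≠ w`, and `A v v`
is twice the number of loops at `v`. -/
noncomputable def adjMatrix (G : MGraph) : Matrix (Fin G.n) (Fin G.n) ℂ := fun v w =>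
  (((Finset.univ.filter fun e => G.ends e = some (v, w)).card +
    (Finset.univ.filter fun e => G.ends e = some (w, v)).card : ℕ) : ℂ)

/-- The characteristic polynomial `det (t·I - A)` of a graph, evaluated at `t`. -/
noncomputable def charPolyAt (G : MGraph) (t : ℂ) : ℂ :=
  Matrix.det (t • (1 : Matrix (Fin G.n) (Fin G.n) ℂ) - adjMatrix G)

/-! ### Ordinary partition functions

A `k`-colour edge colouring model is a linear functional on the symmetric algebra
`S V_k`; since `V_k` has basis `e_1, …, e_k` we realise `S V_k` as the polynomial
algebra `MvPolynomial (Fin k) ℂ`, with `e_i = X i` and `⊙ = *`. -/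
noncomputable def ordPF (k : ℕ) (h : MvPolynomial (Fin k) ℂ →ₗ[ℂ] ℂ) (G : MGraph) : ℂ :=
  ∑ ψ : Fin G.m → Fin k, ∏ v : Fin G.n,
    h (∏ d : {d : Fin G.m × Bool // dartVertex G d = some v}, MvPolynomial.X (ψ d.val.1))

/-! ### The exterior side -/

/-- The basis vector `f_i` of `V_{2ℓ}` inside the exterior algebra `⋀ V_{2ℓ}`. -/
noncomputable def fvec (l : ℕ) (i : Fin (2 * l)) : ExteriorAlgebra ℂ (Fin (2 * l) → ℂ) :=
  ExteriorAlgebra.ι ℂ (Pi.single i 1)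

/-- `g_i = -f_{i+ℓ}` for `i ≤ ℓ` and `g_i = f_{i-ℓ}` for `i > ℓ` (0-indexed). -/
noncomputable def gvec (l : ℕ) (i : Fin (2 * l)) : ExteriorAlgebra ℂ (Fin (2 * l) → ℂ) :=
  if h : (i : ℕ) < l then -fvec l ⟨(i : ℕ) + l, by omega⟩
  else fvec l ⟨(i : ℕ) - l, by have := i.isLt; omega⟩

/-! ### Eulerian orientations, local pairings, circuits -/

/-- The darts of `F` that are incoming under the orientation `ω` (the orientation `ω e = true`
directs the edge `e` from its first listed endpoint towards the second). -/
def inDartSet (G : MGraph) (F : Finset (Fin G.m)) (ω : Fin G.m → Bool) :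
    Set (Fin G.m × Bool) := {d | d.1 ∈ F ∧ ω d.1 = d.2}

/-- The darts of `F` that are outgoing under `ω`. -/
def outDartSet (G : MGraph) (F : Finset (Fin G.m)) (ω : Fin G.m → Bool) :
    Set (Fin G.m × Bool) := {d | d.1 ∈ F ∧ ω d.1 ≠ d.2}

/-- `κ` is a local pairing of `(V,F)` compatible with the orientation `ω`: at each vertex it
matches the incoming darts bijectively with the outgoing darts (so `ω` is in particular an
Eulerian orientation), and on a circle edge it simply pairs its two ends together. -/
structure Compatible (G : MGraph) (F : Finset (Fin G.m)) (ω : Fin G.m → Bool)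
    (κ : Fin G.m × Bool → Fin G.m × Bool) : Prop where
  bij : Set.BijOn κ (inDartSet G F ω) (outDartSet G F ω)
  vert : ∀ d ∈ inDartSet G F ω, dartVertex G (κ d) = dartVertex G d
  circ : ∀ d ∈ inDartSet G F ω, G.ends d.1 = none → κ d = flipDart G d

/-- Following the circuit structure: an incoming dart moves to its κ-partner, an outgoing
dart moves along its edge to the opposite end. -/
def nextDart (G : MGraph) (ω : Fin G.m → Bool) (κ : Fin G.m × Bool → Fin G.m × Bool)
    (d : Fin G.m × Bool) : Fin G.m × Bool :=
  if ω d.1 = d.2 then κ d else flipDart G d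

/-- `c(κ)`: the number of circuits into which `κ` decomposes `F`, i.e. the number of orbits
of `nextDart` on the darts of `F`. -/
noncomputable def circuitCount (G : MGraph) (F : Finset (Fin G.m)) (ω : Fin G.m → Bool)
    (κ : Fin G.m × Bool → Fin G.m × Bool) : ℕ :=
  Nat.card (Quotient (Relation.EqvGen.setoid
    fun d d' : {a : Fin G.m × Bool // a.1 ∈ F} =>
      (d' : Fin G.m × Bool) = nextDart G ω κ d))

/-! ### Mixed partition functions -/

/-- `⊙_{a ∈ δ_{E∖F}(v)} e_{ψ(a)}`: the symmetric monomial at `v` given the colouring `ψ`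
of the edges outside `F` (loops contribute twice). -/
noncomputable def symAt (k : ℕ) (G : MGraph) (F : Finset (Fin G.m)) (v : Fin G.n)
    (ψ : {e : Fin G.m // e ∉ F} → Fin k) : MvPolynomial (Fin k) ℂ :=
  ∏ d : {d : Fin G.m × Bool // d.1 ∉ F ∧ dartVertex G d = some v},
    MvPolynomial.X (ψ ⟨d.val.1, d.prop.1⟩)

/-- A canonical listing of all darts. -/
def allDarts (G : MGraph) : List (Fin G.m × Bool) :=
  (List.finRange G.m).flatMap fun e => [(e, false), (e, true)]

/-- `⋀_{(a₁,a₂) ∈ κ_v} f_{φ(a₁)} ∧ g_{φ(a₂)}`: the wedge at `v` of the paired darts of `F`,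
given the colouring `φ` of the edges of `F`.  (The factors have even degree, so the order
of the product is irrelevant; we use a fixed canonical order.) -/
noncomputable def wedgeAt (l : ℕ) (G : MGraph) (F : Finset (Fin G.m)) (ω : Fin G.m → Bool)
    (κ : Fin G.m × Bool → Fin G.m × Bool) (v : Fin G.n)
    (φ : {e : Fin G.m // e ∈ F} → Fin (2 * l)) : ExteriorAlgebra ℂ (Fin (2 * l) → ℂ) :=
  (((allDarts G).filter fun d =>
      decide (d.1 ∈ F ∧ ω d.1 = d.2 ∧ dartVertex G d = some v)).map fun d =>
    (if h : d.1 ∈ F then fvec l (φ ⟨d.1, h⟩) else 0) *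
    (if h : (κ d).1 ∈ F then gvec l (φ ⟨(κ d).1, h⟩) else 0)).prod

/-- `s_h(G,F,ω,κ)` for a `(k,2ℓ)`-colour edge colouring model
`h ∈ (S V_k ⊗ ⋀ V_{2ℓ})^*`. -/
noncomputable def sPart (k l : ℕ) (G : MGraph)
    (h : MvPolynomial (Fin k) ℂ ⊗[ℂ] ExteriorAlgebra ℂ (Fin (2 * l) → ℂ) →ₗ[ℂ] ℂ)
    (F : Finset (Fin G.m)) (ω : Fin G.m → Bool)
    (κ : Fin G.m × Bool → Fin G.m × Bool) : ℂ :=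
  (-1 : ℂ) ^ circuitCount G F ω κ *
    ∑ φ : {e : Fin G.m // e ∈ F} → Fin (2 * l),
      ∑ ψ : {e : Fin G.m // e ∉ F} → Fin k,
        ∏ v : Fin G.n, h (symAt k G F v ψ ⊗ₜ[ℂ] wedgeAt l G F ω κ v φ)

open Classical in
/-- `s_h(G,F)`: the common value of `s_h(G,F,ω,κ)` over all Eulerian orientations `ω` of
`(V,F)` with compatible local pairings `κ` (such a pair exists iff `F` is Eulerian; the
value is independent of the choice, and we take `0` if no such pair exists). -/
noncomputable def sEuler (k l : ℕ) (G : MGraph)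
    (h : MvPolynomial (Fin k) ℂ ⊗[ℂ] ExteriorAlgebra ℂ (Fin (2 * l) → ℂ) →ₗ[ℂ] ℂ)
    (F : Finset (Fin G.m)) : ℂ :=
  if hc : ∃ p : (Fin G.m → Bool) × (Fin G.m × Bool → Fin G.m × Bool),
      Compatible G F p.1 p.2
  then sPart k l G h F hc.choose.1 hc.choose.2
  else 0

/-- The mixed partition function `p_h(G) = ∑_{F ⊆ E Eulerian} s_h(G,F)`. -/
noncomputable def mixedPF (k l : ℕ)
    (h : MvPolynomial (Fin k) ℂ ⊗[ℂ] ExteriorAlgebra ℂ (Fin (2 * l) → ℂ) →ₗ[ℂ] ℂ)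
    (G : MGraph) : ℂ :=
  ∑ F : Finset (Fin G.m), sEuler k l G h F

/-! ### Skew partition functions (vertex-dependent models `h^v ∈ (⋀ V_{2ℓ})^*`) -/

/-- `s_h(G(F),ω,κ)` for a family `h = (h^v)_{v ∈ V}` of functionals on `⋀ V_{2ℓ}`. -/
noncomputable def skewPartAt (l : ℕ) (G : MGraph)
    (hv : Fin G.n → (ExteriorAlgebra ℂ (Fin (2 * l) → ℂ) →ₗ[ℂ] ℂ))
    (F : Finset (Fin G.m)) (ω : Fin G.m → Bool)
    (κ : Fin G.m × Bool → Fin G.m × Bool) : ℂ :=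
  (-1 : ℂ) ^ circuitCount G F ω κ *
    ∑ φ : {e : Fin G.m // e ∈ F} → Fin (2 * l),
      ∏ v : Fin G.n, hv v (wedgeAt l G F ω κ v φ)

open Classical in
/-- The skew partition function `p_h(G)` of a family `h = (h^v)_{v ∈ V}`: equal to
`s_h(G,ω,κ)` (for any Eulerian orientation `ω` with compatible pairing `κ`) if `G` is
Eulerian, and `0` otherwise. -/
noncomputable def skewPF (l : ℕ) (G : MGraph)
    (hv : Fin G.n → (ExteriorAlgebra ℂ (Fin (2 * l) → ℂ) →ₗ[ℂ] ℂ)) : ℂ :=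
  if hc : ∃ p : (Fin G.m → Bool) × (Fin G.m × Bool → Fin G.m × Bool),
      Compatible G Finset.univ p.1 p.2
  then skewPartAt l G hv Finset.univ hc.choose.1 hc.choose.2
  else 0
/-! ### Fragments and edge-connection matrices -/

/-- A `t`-fragment: a graph together with `t` distinct vertices of degree one labelled
`1, …, t`.  The edge incident with a labelled vertex is an *open end*. -/
structure Fragment (t : ℕ) where
  G : MGraph
  lab : Fin t → Fin G.n
  inj : Function.Injective lab
  deg1 : ∀ i, degreeV G (lab i) = 1

/-- The vertex of a dart of the disjoint union of the two underlying graphs. -/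
def dartVertexSum {t : ℕ} (F₁ F₂ : Fragment t) :
    (Fin F₁.G.m ⊕ Fin F₂.G.m) × Bool → Option (Fin F₁.G.n ⊕ Fin F₂.G.n)
  | (Sum.inl e, b) => (dartVertex F₁.G (e, b)).map Sum.inl
  | (Sum.inr e, b) => (dartVertex F₂.G (e, b)).map Sum.inr

/-- Is the edge `e` (of the disjoint union) incident with the vertex labelled `i`? -/
def incLabel {t : ℕ} (F₁ F₂ : Fragment t) (i : Fin t) :
    Fin F₁.G.m ⊕ Fin F₂.G.m → Prop
  | Sum.inl e => ∃ b, dartVertex F₁.G (e, b) = some (F₁.lab i)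
  | Sum.inr e => ∃ b, dartVertex F₂.G (e, b) = some (F₂.lab i)

/-- Edges of the disjoint union that get glued into a single edge of `F₁ * F₂`: the
equivalence generated by sharing a label. -/
def glueSetoid {t : ℕ} (F₁ F₂ : Fragment t) : Setoid (Fin F₁.G.m ⊕ Fin F₂.G.m) :=
  Relation.EqvGen.setoid fun e e' => ∃ i, incLabel F₁ F₂ i e ∧ incLabel F₁ F₂ i e'

/-- The unlabelled vertices of the two fragments: the vertex set of `F₁ * F₂`. -/
def UnlabVert {t : ℕ} (F₁ F₂ : Fragment t) : Type :=
  {v : Fin F₁.G.n // v ∉ Set.range F₁.lab} ⊕ {v : Fin F₂.G.n // v ∉ Set.range F₂.lab}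

instance {t : ℕ} (F₁ F₂ : Fragment t) : Finite (UnlabVert F₁ F₂) := by
  unfold UnlabVert; infer_instance

open Classical in
/-- The unlabelled vertex at which a dart of the disjoint union sits, if any. -/
noncomputable def freeVert {t : ℕ} (F₁ F₂ : Fragment t)
    (d : (Fin F₁.G.m ⊕ Fin F₂.G.m) × Bool) : Option (UnlabVert F₁ F₂) :=
  match dartVertexSum F₁ F₂ d with
  | none => none
  | some (Sum.inl v) =>
      if h : v ∈ Set.range F₁.lab then none else some (Sum.inl ⟨v, h⟩)
  | some (Sum.inr v) =>
      if h : v ∈ Set.range F₂.lab then none else some (Sum.inr ⟨v, h⟩)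

open Classical in
/-- The gluing `F₁ * F₂` of two `t`-fragments: for each label `i` the two labelled
degree-one vertices are deleted and their two open ends are glued into one edge;
maximal chains of glued edges become single edges, and closed chains become circles. -/
noncomputable def glueFrag {t : ℕ} (F₁ F₂ : Fragment t) : MGraph := by
  letI : Fintype (Quotient (glueSetoid F₁ F₂)) := Fintype.ofFinite _
  letI : Fintype (UnlabVert F₁ F₂) := Fintype.ofFinite _
  refine
    { n := Fintype.card (UnlabVert F₁ F₂)
      m := Fintype.card (Quotient (glueSetoid F₁ F₂))
      ends := fun q => ?_ }
  let eQ := Fintype.equivFin (Quotient (glueSetoid F₁ F₂))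
  let eW := Fintype.equivFin (UnlabVert F₁ F₂)
  let L : List ((Fin F₁.G.m ⊕ Fin F₂.G.m) × Bool) :=
    (((List.finRange F₁.G.m).map Sum.inl ++ (List.finRange F₂.G.m).map Sum.inr).flatMap
      fun e => [(e, false), (e, true)])
  -- the darts of the class `q` sitting at unlabelled vertices, in canonical order
  let free := L.filter fun d =>
    decide (eQ (Quotient.mk (glueSetoid F₁ F₂) d.1) = q) && (freeVert F₁ F₂ d).isSome
  exact
    match free with
    | d₁ :: d₂ :: _ =>
        match freeVert F₁ F₂ d₁, freeVert F₁ F₂ d₂ with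
        | some a, some b => some (eW a, eW b)
        | _, _ => none
    | _ => none

/-- The `t`-th edge-connection matrix `M_{f,t}` of a graph parameter `f`:
`M_{f,t}(F₁, F₂) = f(F₁ * F₂)`. -/
noncomputable def connMatrix (f : MGraph → ℂ) (t : ℕ) :
    Fragment t → Fragment t → ℂ :=
  fun F₁ F₂ => f (glueFrag F₁ F₂)

/-- The rank of the (infinite) matrix `M_{f,t}`: the dimension of the span of its rows. -/
noncomputable def connRank (f : MGraph → ℂ) (t : ℕ) : Cardinal :=
  Module.rank ℂ (Submodule.span ℂ (Set.range (connMatrix f t)))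
/-! ### The circuit partition polynomial

A partition of the edge set of a graph into circuits (closed walks with distinct edges,
up to rotation and reversal) is the same thing as a *transition system*: at every vertex,
a partition of the incident edge-ends into unordered pairs (consecutive edges of the
circuits), encoded as a fixed-point-free involution `κ` of the darts preserving the
vertices; the two ends of a circle edge are paired with each other. -/
def IsTransition (G : MGraph) (κ : Fin G.m × Bool → Fin G.m × Bool) : Prop :=
  (∀ d, κ (κ d) = d) ∧ (∀ d, κ d ≠ d) ∧
  (∀ d, dartVertex G (κ d) = dartVertex G d) ∧
  (∀ d, G.ends d.1 = none → κ d = flipDart G d)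

/-- The number of circuits of the circuit partition corresponding to the transition
system `κ`: the walk step `d ↦ flip (κ d)` has two orbits (the two directions of travel)
per circuit. -/
noncomputable def tsCircuitCount (G : MGraph) (κ : Fin G.m × Bool → Fin G.m × Bool) : ℕ :=
  Nat.card (Quotient (Relation.EqvGen.setoid
    fun d d' : Fin G.m × Bool => d' = flipDart G (κ d))) / 2

open Classical in
/-- The circuit partition polynomial `J(G,x) = ∑_{C ∈ 𝒞(G)} x^{|C|}`, the sum being over
all partitions `C` of the edge set of `G` into circuits (equivalently, over all
transition systems). -/
noncomputable def circuitPartPoly (G : MGraph) (x : ℂ) : ℂ :=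
  ∑ κ : {κ : Fin G.m × Bool → Fin G.m × Bool // IsTransition G κ},
    x ^ tsCircuitCount G κ.val

/-- `ddf α = (α-1)!!` with the convention `(2d-1)!! = (2d-1)(2d-3)⋯3⋅1`, `(-1)!! = 1`
and `(2d)!! = 0`; that is, `ddf α` is `(α-1)(α-3)⋯3⋅1` for even `α` and `0` for odd `α`. -/
def ddf : ℕ → ℕ
  | 0 => 1
  | 1 => 0
  | (n + 2) => (n + 1) * ddf n

/-! ### Cycles and their adjacency matrices -/

/-- The adjacency matrix of the cycle graph `C_n` (for `n ≥ 3`): vertices `0, …, n-1`,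
with an edge between consecutive vertices modulo `n`. -/
def cycAdj (n : ℕ) : Matrix (Fin n) (Fin n) ℝ := fun i j =>
  if (j : ℕ) = ((i : ℕ) + 1) % n ∨ (i : ℕ) = ((j : ℕ) + 1) % n then 1 else 0

/-! ### Directed perfect matchings -/

/-- A directed perfect matching on `[2m]`: a set of arcs (ordered pairs of distinct
elements) such that every element is the head or the tail of exactly one arc. -/
def IsDirPM (m : ℕ) (M : Finset (Fin (2 * m) × Fin (2 * m))) : Prop :=
  (∀ a ∈ M, a.1 ≠ a.2) ∧
  ∀ v : Fin (2 * m), ∃! a, a ∈ M ∧ (a.1 = v ∨ a.2 = v)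

/-- The number of connected components of the digraph `([2m], M ∪ N)`. -/
noncomputable def compCount (m : ℕ) (M N : Finset (Fin (2 * m) × Fin (2 * m))) : ℕ :=
  Nat.card (Quotient (Relation.EqvGen.setoid fun v w : Fin (2 * m) =>
    ∃ a, (a ∈ M ∨ a ∈ N) ∧ ((a.1 = v ∧ a.2 = w) ∨ (a.1 = w ∧ a.2 = v))))

open Classical in
/-- Reversing the arcs of the sub-multiset `S` of the arc multiset `A` turns `A` into an
Eulerian digraph (in-degree = out-degree at every vertex). -/
def ReversalEulerizes (m : ℕ) (A S : Multiset (Fin (2 * m) × Fin (2 * m))) : Prop :=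
  ∀ v : Fin (2 * m),
    Multiset.countP (fun a => a.1 = v) ((A - S) + S.map Prod.swap) =
    Multiset.countP (fun a => a.2 = v) ((A - S) + S.map Prod.swap)

namespace NoECM

section Spectral
open Module Set Matrix

lemma trace_restrict_pow_maxGen {V : Type*} [AddCommGroup V] [Module ℂ V]
    [FiniteDimensional ℂ V] (g : Module.End ℂ V) (μ : ℂ) (m : ℕ)
    (hmap : MapsTo (g ^ m) (g.maxGenEigenspace μ) (g.maxGenEigenspace μ)) :
    LinearMap.trace ℂ _ ((g ^ m).restrict hmap)
      = μ ^ m * (finrank ℂ (g.maxGenEigenspace μ) : ℂ) := by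
  classical
  set p := g.maxGenEigenspace μ with hp
  have hg : ∀ x ∈ p, g x ∈ p :=
    Module.End.mapsTo_maxGenEigenspace_of_comm (Commute.refl g) μ
  have hpow : (g.restrict hg) ^ m = (g ^ m).restrict hmap := by
    rw [Module.End.pow_restrict m hg]
  rw [← hpow]
  set r := g.restrict hg with hr
  set a : Module.End ℂ p := algebraMap ℂ _ μ with ha
  set ν : Module.End ℂ p := r - a with hν
  have hνnil : IsNilpotent ν := by
    have h2 := g.isNilpotent_restrict_maxGenEigenspace_sub_algebraMap μ
    have : ν = (g - algebraMap ℂ (Module.End ℂ V) μ).restrict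
        (Module.End.mapsTo_maxGenEigenspace_of_comm
          (Algebra.mul_sub_algebraMap_commutes g μ) μ) := by
      ext x
      simp [hν, hr, ha, LinearMap.restrict_apply, LinearMap.sub_apply,
        Module.algebraMap_end_apply]
      rfl
    rwa [this]
  have hcomm : Commute a ν := Algebra.commutes μ ν
  have hre : r = a + ν := by rw [hν]; abel
  rw [hre, hcomm.add_pow]
  rw [map_sum]
  rw [Finset.sum_range_succ]
  have hz : ∀ j ∈ Finset.range m,
      LinearMap.trace ℂ p (a ^ j * ν ^ (m - j) * (m.choose j : Module.End ℂ p)) = 0 := by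
    intro j hj
    have hjm : m - j ≠ 0 := by have := Finset.mem_range.mp hj; omega
    have hn1 : IsNilpotent (ν ^ (m - j)) := hνnil.pow_of_pos hjm
    have hn2 : IsNilpotent (a ^ j * ν ^ (m - j) * (m.choose j : Module.End ℂ p)) := by
      have c1 : Commute (a ^ j) (ν ^ (m - j)) := hcomm.pow_pow _ _
      have h3 : IsNilpotent (a ^ j * ν ^ (m - j)) := c1.isNilpotent_mul_left hn1
      exact ((Nat.cast_commute (m.choose j) _).symm).isNilpotent_mul_right h3
    have := LinearMap.isNilpotent_trace_of_isNilpotent hn2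
    exact this.eq_zero
  rw [Finset.sum_eq_zero hz, zero_add]
  have : a ^ m * ν ^ (m - m) * (m.choose m : Module.End ℂ p) = a ^ m := by
    simp
  rw [this, ha, ← map_pow, Module.algebraMap_end_eq_smul_id]
  rw [_root_.map_smul, LinearMap.trace_id, smul_eq_mul]

lemma isNilpotent_of_trace_pow {V : Type*} [AddCommGroup V] [Module ℂ V]
    [FiniteDimensional ℂ V] (g : Module.End ℂ V)
    (h : ∀ m : ℕ, 0 < m → LinearMap.trace ℂ V (g ^ m) = 0) : IsNilpotent g := by
  classical
  set N := g.maxGenEigenspace with hN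
  have hIndep : iSupIndep N := g.independent_maxGenEigenspace
  haveI : WellFoundedGT (Submodule ℂ V) := inferInstance
  have hfin : {μ | N μ ≠ ⊥}.Finite := WellFoundedGT.finite_ne_bot_of_iSupIndep hIndep
  have hInternal : DirectSum.IsInternal N :=
    DirectSum.isInternal_submodule_of_iSupIndep_of_iSup_eq_top hIndep
      g.iSup_maxGenEigenspace_eq_top
  have hmap : ∀ (m : ℕ) (μ : ℂ), MapsTo (g ^ m) (N μ) (N μ) := fun m μ =>
    Module.End.mapsTo_maxGenEigenspace_of_comm (Commute.pow_right (Commute.refl g) m) μ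
  have key : ∀ m : ℕ, 0 < m →
      ∑ μ ∈ hfin.toFinset, μ ^ m * (finrank ℂ (N μ) : ℂ) = 0 := by
    intro m hm
    rw [← h m hm, LinearMap.trace_eq_sum_trace_restrict' hInternal hfin (hmap m)]
    exact Finset.sum_congr rfl fun μ _ => (trace_restrict_pow_maxGen g μ m (hmap m μ)).symm
  set s := hfin.toFinset.erase 0 with hs
  have hkey' : ∀ m : ℕ, 0 < m → ∑ μ ∈ s, μ ^ m * (finrank ℂ (N μ) : ℂ) = 0 := by
    intro m hm
    rw [← key m hm]
    apply Finset.sum_subset (Finset.erase_subset _ _)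
    intro μ hμ hns
    have : μ = 0 := by
      by_contra hne
      exact hns (Finset.mem_erase.mpr ⟨hne, hμ⟩)
    subst this
    rw [zero_pow (by omega), zero_mul]
  have hempty : s = ∅ := by
    by_contra hne
    set r := s.card with hrr
    set e := s.equivFin with he
    set ν : Fin r → ℂ := fun j => (e.symm j : ℂ) with hνd
    have hinj : Function.Injective ν := fun a b hab =>
      e.symm.injective (Subtype.coe_injective hab)
    set c : Fin r → ℂ := fun j => ν j * (finrank ℂ (N (ν j)) : ℂ) with hc
    have hsys : (Matrix.vandermonde ν)ᵀ.mulVec c = 0 := by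
      funext i
      have h1 := hkey' (i + 1) (by omega)
      have h2 : ∑ μ ∈ s, μ ^ ((i : ℕ) + 1) * (finrank ℂ (N μ) : ℂ)
          = ∑ j : Fin r, ν j ^ ((i : ℕ) + 1) * (finrank ℂ (N (ν j)) : ℂ) := by
        rw [← Finset.sum_attach s (fun μ => μ ^ ((i : ℕ) + 1) * (finrank ℂ (N μ) : ℂ))]
        exact (Equiv.sum_comp e.symm _).symm
      simp only [Matrix.mulVec, Matrix.transpose_apply, Matrix.vandermonde, dotProduct,
        Pi.zero_apply, Matrix.of_apply]
      rw [← h1, h2]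
      apply Finset.sum_congr rfl
      intro j _
      ring
    have hdet : (Matrix.vandermonde ν)ᵀ.det ≠ 0 := by
      rw [Matrix.det_transpose]
      intro hd
      obtain ⟨i, j, hij, hne2⟩ := Matrix.det_vandermonde_eq_zero_iff.mp hd
      exact hne2 (hinj hij)
    have hc0 : c = 0 := Matrix.eq_zero_of_mulVec_eq_zero hdet hsys
    obtain ⟨μ0, hμ0⟩ := Finset.nonempty_iff_ne_empty.mpr hne
    have hj := congrFun hc0 (e ⟨μ0, hμ0⟩)
    simp only [hc, Pi.zero_apply] at hj
    have hνval : ν (e ⟨μ0, hμ0⟩) = μ0 := by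
      show ((e.symm (e ⟨μ0, hμ0⟩)) : ℂ) = μ0
      rw [Equiv.symm_apply_apply]
    rw [hνval] at hj
    have hμ0ne : μ0 ≠ 0 := (Finset.mem_erase.mp hμ0).1
    have hd0 : (finrank ℂ (N μ0) : ℂ) ≠ 0 := by
      have hnb : N μ0 ≠ ⊥ := by
        have := (Finset.mem_erase.mp hμ0).2
        rwa [Set.Finite.mem_toFinset] at this
      rw [Nat.cast_ne_zero]
      intro hz
      exact hnb (Submodule.finrank_eq_zero.mp hz)
    rcases mul_eq_zero.mp hj with h' | h'
    · exact hμ0ne h'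
    · exact hd0 h'
  have hbot : ∀ μ : ℂ, μ ≠ 0 → N μ = ⊥ := by
    intro μ hμ
    by_contra hb
    have : μ ∈ s := Finset.mem_erase.mpr ⟨hμ, hfin.mem_toFinset.mpr hb⟩
    rw [hempty] at this
    exact absurd this (Finset.notMem_empty μ)
  have htop : N 0 = ⊤ := by
    refine le_antisymm le_top ?_
    rw [← g.iSup_maxGenEigenspace_eq_top]
    apply iSup_le
    intro μ
    show N μ ≤ N 0
    by_cases hμ : μ = 0
    · subst hμ; exact le_rfl
    · rw [hbot μ hμ]; exact bot_le
  refine ((LinearMap.charpoly_nilpotent_tfae g).out 2 0).mp ?_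
  intro x
  have hx : x ∈ N 0 := htop ▸ Submodule.mem_top
  rw [hN, Module.End.mem_maxGenEigenspace] at hx
  obtain ⟨kx, hkx⟩ := hx
  exact ⟨kx, by simpa using hkx⟩

end Spectral

noncomputable section

open Matrix MvPolynomial

/-- The cycle graph with `n+1` vertices and `n+1` edges (a loop when `n = 0`). -/
abbrev cyc (n : ℕ) : MGraph := ⟨n + 1, n + 1, fun e => some (e, e + 1)⟩

variable {k : ℕ}

/-- Product of matrix entries along a walk starting at `i` with successive vertices `ψ`. -/
def wprod (B : Matrix (Fin k) (Fin k) ℂ) : (n : ℕ) → Fin k → (Fin n → Fin k) → ℂ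
  | 0, _, _ => 1
  | n + 1, i, ψ => B i (ψ 0) * wprod B n (ψ 0) (fun t => ψ t.succ)

/-- End vertex of the walk. -/
def wend : (n : ℕ) → Fin k → (Fin n → Fin k) → Fin k
  | 0, i, _ => i
  | n + 1, _, ψ => wend n (ψ 0) (fun t => ψ t.succ)

lemma wprod_cons (B : Matrix (Fin k) (Fin k) ℂ) (n : ℕ) (i x : Fin k) (ψ : Fin n → Fin k) :
    wprod B (n + 1) i (Fin.cons x ψ : Fin (n + 1) → Fin k) = B i x * wprod B n x ψ := by
  have h1 : (fun t : Fin n => (Fin.cons x ψ : Fin (n + 1) → Fin k) t.succ) = ψ := by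
    funext t; simp
  have h0 : (Fin.cons x ψ : Fin (n + 1) → Fin k) 0 = x := rfl
  show B i ((Fin.cons x ψ : Fin (n + 1) → Fin k) 0) *
    wprod B n ((Fin.cons x ψ : Fin (n + 1) → Fin k) 0)
      (fun t => (Fin.cons x ψ : Fin (n + 1) → Fin k) t.succ) = _
  rw [h1, h0]

lemma wend_cons {k : ℕ} (n : ℕ) (i x : Fin k) (ψ : Fin n → Fin k) :
    wend (n + 1) i (Fin.cons x ψ : Fin (n + 1) → Fin k) = wend n x ψ := by
  have h1 : (fun t : Fin n => (Fin.cons x ψ : Fin (n + 1) → Fin k) t.succ) = ψ := by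
    funext t; simp
  have h0 : (Fin.cons x ψ : Fin (n + 1) → Fin k) 0 = x := rfl
  show wend n ((Fin.cons x ψ : Fin (n + 1) → Fin k) 0)
      (fun t => (Fin.cons x ψ : Fin (n + 1) → Fin k) t.succ) = _
  rw [h1, h0]

lemma mulVec_pow_eq (B : Matrix (Fin k) (Fin k) ℂ) (n : ℕ) (w : Fin k → ℂ) (i : Fin k) :
    (B ^ n).mulVec w i = ∑ ψ : Fin n → Fin k, wprod B n i ψ * w (wend n i ψ) := by
  induction n generalizing i with
  | zero =>
    simp [wprod, wend, Matrix.mulVec, dotProduct, Matrix.one_apply]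
  | succ n ih =>
    rw [pow_succ', ← Matrix.mulVec_mulVec]
    have : B.mulVec ((B ^ n).mulVec w) i = ∑ x : Fin k, B i x * ((B ^ n).mulVec w) x := by
      simp [Matrix.mulVec, dotProduct]
    rw [this]
    have : ∀ x, B i x * ((B ^ n).mulVec w) x
        = ∑ ψ : Fin n → Fin k, B i x * (wprod B n x ψ * w (wend n x ψ)) := by
      intro x; rw [ih x, Finset.mul_sum]
    simp_rw [this]
    rw [← Equiv.sum_comp (Fin.consEquiv (fun _ : Fin (n+1) => Fin k))
      (fun ψ => wprod B (n+1) i ψ * w (wend (n+1) i ψ)), Fintype.sum_prod_type]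
    refine Finset.sum_congr rfl fun x _ => Finset.sum_congr rfl fun ψ _ => ?_
    show B i x * (wprod B n x ψ * w (wend n x ψ))
      = wprod B (n+1) i ((Fin.consEquiv (fun _ : Fin (n+1) => Fin k)) (x, ψ)) *
        w (wend (n+1) i ((Fin.consEquiv (fun _ : Fin (n+1) => Fin k)) (x, ψ)))
    have hce : ((Fin.consEquiv (fun _ : Fin (n+1) => Fin k)) (x, ψ))
        = (Fin.cons x ψ : Fin (n+1) → Fin k) := rfl
    rw [hce, wprod_cons, wend_cons, mul_assoc]

lemma wend_last (n : ℕ) (i : Fin k) (ψ : Fin (n + 1) → Fin k) :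
    wend (n + 1) i ψ = ψ (Fin.last n) := by
  induction n generalizing i with
  | zero => rfl
  | succ n ih =>
    show wend (n + 1) (ψ 0) (fun t => ψ t.succ) = _
    rw [ih]
    show ψ (Fin.last n).succ = ψ (Fin.last (n+1))
    rw [Fin.succ_last]

lemma wprod_eq_prod (B : Matrix (Fin k) (Fin k) ℂ) (n : ℕ) (i : Fin k) (ψ : Fin n → Fin k) :
    wprod B n i ψ = ∏ t : Fin n, B ((Fin.cons i ψ : Fin (n + 1) → Fin k) t.castSucc) (ψ t) := by
  induction n generalizing i with
  | zero => simp [wprod]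
  | succ n ih =>
    show B i (ψ 0) * wprod B n (ψ 0) (fun t => ψ t.succ) = _
    rw [ih, Fin.prod_univ_succ]
    have hfac : ∀ t : Fin n,
        B ((Fin.cons (ψ 0) (fun t : Fin n => ψ t.succ) : Fin (n + 1) → Fin k) t.castSucc)
            (ψ t.succ)
          = B ((Fin.cons i ψ : Fin (n + 2) → Fin k) (t.succ.castSucc)) (ψ t.succ) := by
      intro t
      congr 1
      have h1 : (Fin.cons (ψ 0) (fun t : Fin n => ψ t.succ) : Fin (n + 1) → Fin k) = ψ := by
        funext s
        rcases Fin.eq_zero_or_eq_succ s with hs | ⟨s', hs⟩ <;> subst hs <;> simp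
      rw [h1, ← Fin.succ_castSucc]
      show ψ t.castSucc = (Fin.cons i ψ : Fin (n + 2) → Fin k) (t.castSucc).succ
      rw [Fin.cons_succ]
    congr 1
    exact Finset.prod_congr rfl fun t _ => hfac t

lemma fin_zero_sub_one (n : ℕ) : (0 : Fin (n + 1)) - 1 = Fin.last n := by
  apply Fin.ext
  rw [Fin.sub_def]
  show ((n + 1) - ((1 : Fin (n+1)) : ℕ) + 0) % (n + 1) = n
  rw [Fin.val_one']
  rcases n with - | n
  · rfl
  · have : (1 : ℕ) % (n + 1 + 1) = 1 := Nat.mod_eq_of_lt (by omega)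
    rw [this]
    simp [Nat.mod_eq_of_lt]

lemma trace_pow_eq (B : Matrix (Fin k) (Fin k) ℂ) (n : ℕ) :
    Matrix.trace (B ^ (n + 1))
      = ∑ ψ : Fin (n + 1) → Fin k, ∏ v : Fin (n + 1), B (ψ (v - 1)) (ψ v) := by
  classical
  have hdiag : ∀ i : Fin k, (B ^ (n + 1)) i i
      = ∑ ψ : Fin (n + 1) → Fin k,
          wprod B (n + 1) i ψ * (if ψ (Fin.last n) = i then (1 : ℂ) else 0) := by
    intro i
    have h1 := mulVec_pow_eq B (n + 1) (Pi.single i 1) i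
    rw [Matrix.mulVec_single] at h1
    simp only [MulOpposite.op_one, one_smul, Matrix.col_apply] at h1
    rw [h1]
    apply Finset.sum_congr rfl
    intro ψ _
    rw [wend_last, Pi.single_apply]
  rw [Matrix.trace]
  show ∑ i, (B ^ (n+1)) i i = _
  simp_rw [hdiag]
  rw [Finset.sum_comm]
  apply Finset.sum_congr rfl
  intro ψ _
  have h2 : ∀ i : Fin k, wprod B (n+1) i ψ * (if ψ (Fin.last n) = i then (1:ℂ) else 0)
      = if ψ (Fin.last n) = i then wprod B (n+1) i ψ else 0 := by
    intro i
    by_cases hc : ψ (Fin.last n) = i <;> simp [hc]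
  simp_rw [h2]
  rw [Finset.sum_ite_eq]
  simp only [Finset.mem_univ, if_true]
  rw [wprod_eq_prod]
  apply Finset.prod_congr rfl
  intro t _
  congr 1
  by_cases ht : t = 0
  · subst ht
    show (Fin.cons (ψ (Fin.last n)) ψ : Fin (n + 2) → Fin k) 0 = ψ (0 - 1)
    rw [Fin.cons_zero, fin_zero_sub_one]
  · have hval : (t - 1).succ = t.castSucc := by
      apply Fin.ext
      rw [Fin.val_succ, Fin.coe_sub_one, if_neg ht]
      have : 0 < (t : ℕ) := by
        rcases Nat.eq_zero_or_pos (t : ℕ) with h | h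
        · exact absurd (Fin.ext h) ht
        · exact h
      simp [Fin.coe_castSucc]
      omega
    rw [← hval]
    show (Fin.cons (ψ (Fin.last n)) ψ : Fin (n + 2) → Fin k) (t - 1).succ = ψ (t - 1)
    rw [Fin.cons_succ]

lemma dartVertex_cyc (n : ℕ) (d : Fin (n + 1) × Bool) :
    dartVertex (cyc n) d = some (if d.2 then d.1 + 1 else d.1) := by
  rcases d with ⟨e, b⟩
  show (some (e, e + 1)).map (fun p => if b then p.2 else p.1) = _
  cases b <;> rfl

/-- The two darts at the vertex `v` of the cycle. -/
def dartsAt (n : ℕ) (v : Fin (n + 1)) :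
    Bool ≃ {d : Fin (n + 1) × Bool // dartVertex (cyc n) d = some v} where
  toFun b := ⟨((if b then v - 1 else v), b), by
    rw [dartVertex_cyc]
    cases b
    · rfl
    · show some ((v - 1) + 1) = some v
      rw [sub_add_cancel]⟩
  invFun d := d.val.2
  left_inv b := by cases b <;> rfl
  right_inv := by
    rintro ⟨⟨e, b⟩, hd⟩
    rw [dartVertex_cyc] at hd
    apply Subtype.ext
    cases b
    · have he : e = v := by simpa using hd
      simp [he]
    · have he : e + 1 = v := by simpa using hd
      have he' : e = v - 1 := by rw [← he, add_sub_cancel_right]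
      simp [he']

lemma prod_dartsAt {k : ℕ} (n : ℕ) (ψ : Fin (n + 1) → Fin k) (v : Fin (n + 1)) :
    (∏ d : {d : Fin (n + 1) × Bool // dartVertex (cyc n) d = some v},
        (MvPolynomial.X (ψ d.val.1) : MvPolynomial (Fin k) ℂ))
      = MvPolynomial.X (ψ (v - 1)) * MvPolynomial.X (ψ v) := by
  rw [← Equiv.prod_comp (dartsAt n v)
    (fun d => (MvPolynomial.X (ψ d.val.1) : MvPolynomial (Fin k) ℂ))]
  rw [Fintype.prod_bool]
  have h1 : (((dartsAt n v) true : {d : Fin (n + 1) × Bool //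
      dartVertex (cyc n) d = some v}) : Fin (n + 1) × Bool).1 = v - 1 := rfl
  have h2 : (((dartsAt n v) false : {d : Fin (n + 1) × Bool //
      dartVertex (cyc n) d = some v}) : Fin (n + 1) × Bool).1 = v := rfl
  rw [h1, h2]

lemma ordPF_cyc (k : ℕ) (h : MvPolynomial (Fin k) ℂ →ₗ[ℂ] ℂ) (n : ℕ) :
    ordPF k h (cyc n)
      = Matrix.trace ((Matrix.of fun i j : Fin k =>
          h (MvPolynomial.X i * MvPolynomial.X j)) ^ (n + 1)) := by
  rw [trace_pow_eq]
  show (∑ ψ : Fin (n + 1) → Fin k, ∏ v : Fin (n + 1),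
      h (∏ d : {d : Fin (n + 1) × Bool // dartVertex (cyc n) d = some v},
        MvPolynomial.X (ψ d.val.1))) = _
  refine Finset.sum_congr rfl fun ψ _ => Finset.prod_congr rfl fun v _ => ?_
  rw [prod_dartsAt]
  rfl

lemma adj_cyc (n : ℕ) (v w : Fin (n + 1)) :
    adjMatrix (cyc n) v w
      = (if w = v + 1 then 1 else 0) + (if v = w + 1 then 1 else 0) := by
  classical
  have h1 : ∀ a b : Fin (n + 1),
      (Finset.univ.filter fun e : Fin (n + 1) => (cyc n).ends e = some (a, b)).card
        = if b = a + 1 then 1 else 0 := by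
    intro a b
    by_cases hb : b = a + 1
    · subst hb
      rw [if_pos rfl]
      have hset : (Finset.univ.filter fun e : Fin (n + 1) =>
          (cyc n).ends e = some (a, a + 1)) = {a} := by
        ext e
        show e ∈ _ ↔ _
        rw [Finset.mem_filter, Finset.mem_singleton]
        constructor
        · rintro ⟨-, he⟩
          have h12 : ((e, e + 1) : Fin (n + 1) × Fin (n + 1)) = (a, a + 1) :=
            Option.some_inj.mp he
          have := congrArg Prod.fst h12
          simpa using this
        · rintro rfl
          exact ⟨Finset.mem_univ _, rfl⟩
      rw [hset, Finset.card_singleton]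
    · rw [if_neg hb, Finset.card_eq_zero]
      ext e
      simp only [Finset.mem_filter, Finset.mem_univ, true_and, Finset.notMem_empty,
        iff_false]
      intro he
      have h12 : ((e, e + 1) : Fin (n + 1) × Fin (n + 1)) = (a, b) :=
        Option.some_inj.mp he
      have hfst : e = a := by simpa using congrArg Prod.fst h12
      have hsnd : e + 1 = b := by simpa using congrArg Prod.snd h12
      exact hb (by rw [← hsnd, hfst])
  show ((((Finset.univ.filter fun e : Fin (n + 1) => (cyc n).ends e = some (v, w)).card +
      (Finset.univ.filter fun e : Fin (n + 1) => (cyc n).ends e = some (w, v)).card : ℕ)) : ℂ)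
      = _
  rw [h1 v w, h1 w v]
  split_ifs <;> norm_num

lemma charPolyAt_cyc0 : charPolyAt (cyc 0) 0 = -2 := by
  set A : Matrix (Fin 1) (Fin 1) ℂ := fun v w => adjMatrix (cyc 0) v w with hA'
  have hA : A 0 0 = 2 := by
    have h0 : A 0 0 = (if (0 : Fin 1) = 0 + 1 then 1 else 0)
        + (if (0 : Fin 1) = 0 + 1 then 1 else 0) := adj_cyc 0 0 0
    rw [h0, if_pos (by decide)]
    norm_num
  show Matrix.det ((0 : ℂ) • (1 : Matrix (Fin 1) (Fin 1) ℂ) - A) = -2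
  rw [zero_smul, zero_sub, Matrix.det_fin_one, Matrix.neg_apply, hA]

lemma charPolyAt_cyc_dvd4 (n : ℕ) (hdvd : 4 ∣ (n + 1)) : charPolyAt (cyc n) 0 = 0 := by
  classical
  have h2 : 2 ≤ n + 1 := by
    obtain ⟨c, hc⟩ := hdvd
    omega
  set x : Fin (n + 1) → ℂ := fun u => if (u : ℕ) % 4 < 2 then 1 else -1 with hx
  have hxne : x ≠ 0 := by
    intro h0
    have h00 := congrFun h0 0
    simp only [hx, Pi.zero_apply] at h00
    norm_num at h00
  set A : Matrix (Fin (n + 1)) (Fin (n + 1)) ℂ := fun v w => adjMatrix (cyc n) v w with hA'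
  have hAvw : ∀ v w : Fin (n + 1), A v w
      = (if w = v + 1 then 1 else 0) + (if v = w + 1 then 1 else 0) :=
    fun v w => adj_cyc n v w
  have hmv : A.mulVec x = 0 := by
    funext v
    have hterm : ∀ w : Fin (n + 1), A v w * x w
        = (if w = v + 1 then x w else 0) + (if w = v - 1 then x w else 0) := by
      intro w
      rw [hAvw, add_mul]
      have hiff : (v = w + 1) ↔ (w = v - 1) := by
        constructor
        · intro hv; rw [hv, add_sub_cancel_right]
        · intro hw; rw [hw, sub_add_cancel]
      congr 1
      · by_cases hc : w = v + 1 <;> simp [hc]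
      · by_cases hc : w = v - 1 <;> simp [hc, hiff]
    have hsum : A.mulVec x v = x (v + 1) + x (v - 1) := by
      show ∑ w, A v w * x w = _
      simp_rw [hterm]
      rw [Finset.sum_add_distrib, Finset.sum_ite_eq', Finset.sum_ite_eq']
      simp
    rw [hsum]
    have hv1 : ((v + 1 : Fin (n + 1)) : ℕ) % 4 = ((v : ℕ) + 1) % 4 := by
      rw [Fin.add_def]
      show ((v : ℕ) + ((1 : Fin (n + 1)) : ℕ)) % (n + 1) % 4 = _
      rw [Fin.val_one', Nat.mod_mod_of_dvd _ hdvd, Nat.mod_eq_of_lt (show 1 < n + 1 by omega)]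
    have hv2 : ((v - 1 : Fin (n + 1)) : ℕ) % 4 = ((v : ℕ) + 3) % 4 := by
      rw [Fin.sub_def]
      show ((n + 1) - ((1 : Fin (n + 1)) : ℕ) + (v : ℕ)) % (n + 1) % 4 = _
      rw [Fin.val_one', Nat.mod_eq_of_lt (show 1 < n + 1 by omega),
        Nat.mod_mod_of_dvd _ hdvd]
      obtain ⟨c, hc⟩ := hdvd
      omega
    show (if ((v + 1 : Fin (n + 1)) : ℕ) % 4 < 2 then (1 : ℂ) else -1)
        + (if ((v - 1 : Fin (n + 1)) : ℕ) % 4 < 2 then (1 : ℂ) else -1) = 0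
    rw [hv1, hv2]
    by_cases hc : ((v : ℕ) + 1) % 4 < 2
    · rw [if_pos hc, if_neg (by omega)]
      ring
    · rw [if_neg hc, if_pos (by omega)]
      ring
  have hdet : A.det = 0 :=
    Matrix.exists_mulVec_eq_zero_iff.mp ⟨x, hxne, hmv⟩
  show Matrix.det ((0 : ℂ) • (1 : Matrix (Fin (n + 1)) (Fin (n + 1)) ℂ) - A) = 0
  rw [zero_smul, zero_sub, Matrix.det_neg, hdet, mul_zero]

end

end NoECM


/-- **Proposition.** There is no `k ∈ ℕ` and `k`-colour edge colouring model
`h ∈ (S V_k)^*` whose partition function equals the evaluation of the characteristic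
polynomial at `0`, i.e. with `p_h(G) = p(G;0)` for all graphs `G` (graphs here have no
circle component). -/
theorem no_ecm_charPoly_zero :
    ¬ ∃ (k : ℕ) (h : MvPolynomial (Fin k) ℂ →ₗ[ℂ] ℂ),
        ∀ G : MGraph, (∀ e, G.ends e ≠ none) → ordPF k h G = charPolyAt G 0 := by
  rintro ⟨k, h, hyp⟩
  classical
  set B : Matrix (Fin k) (Fin k) ℂ :=
    Matrix.of (fun i j => h (MvPolynomial.X i * MvPolynomial.X j)) with hB
  have htr : ∀ n : ℕ, Matrix.trace (B ^ (n + 1)) = charPolyAt (NoECM.cyc n) 0 := by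
    intro n
    rw [← NoECM.ordPF_cyc k h n]
    exact hyp (NoECM.cyc n) (fun e => Option.some_ne_none _)
  have h1 : Matrix.trace B = -2 := by
    have h0 := htr 0
    rw [pow_one, NoECM.charPolyAt_cyc0] at h0
    exact h0
  have h4 : ∀ m : ℕ, 0 < m → Matrix.trace ((B ^ 4) ^ m) = 0 := by
    intro m hm
    rw [← pow_mul]
    have hn : 4 * m = (4 * m - 1) + 1 := by omega
    rw [hn, htr (4 * m - 1), NoECM.charPolyAt_cyc_dvd4 _ (by omega)]
  have hnil4 : IsNilpotent (B ^ 4) := by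
    have hg : IsNilpotent ((Matrix.toLinAlgEquiv' (B ^ 4)) : Module.End ℂ (Fin k → ℂ)) := by
      apply NoECM.isNilpotent_of_trace_pow
      intro m hm
      have hpow : ((Matrix.toLinAlgEquiv' (B ^ 4)) : Module.End ℂ (Fin k → ℂ)) ^ m
          = Matrix.toLinAlgEquiv' ((B ^ 4) ^ m) := (map_pow Matrix.toLinAlgEquiv' _ _).symm
      rw [hpow, LinearMap.trace_eq_matrix_trace ℂ (Pi.basisFun ℂ (Fin k)),
        LinearMap.toMatrix_eq_toMatrix']
      rw [show (LinearMap.toMatrix'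
          ((Matrix.toLinAlgEquiv' ((B ^ 4) ^ m)) : (Fin k → ℂ) →ₗ[ℂ] (Fin k → ℂ)))
          = (B ^ 4) ^ m from LinearMap.toMatrix'_toLin' _]
      exact h4 m hm
    obtain ⟨r, hr⟩ := hg
    refine ⟨r, ?_⟩
    have heq : Matrix.toLinAlgEquiv' ((B ^ 4) ^ r) = 0 := by
      rw [map_pow]
      exact hr
    have := congrArg (Matrix.toLinAlgEquiv' (R := ℂ) (n := Fin k)).symm heq
    simpa using this
  have hnilB : IsNilpotent B := by
    obtain ⟨r, hr⟩ := hnil4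
    exact ⟨4 * r, by rw [pow_mul]; exact hr⟩
  have h0 : Matrix.trace B = 0 :=
    (Matrix.isNilpotent_trace_of_isNilpotent hnilB).eq_zero
  rw [h1] at h0
  norm_num at h0
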